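/- Let A = {a,b,c,d} and let R10 be the 4-agent profile with ≿_1: {a,b} ≻ {c,d}; ≿_2: {c,d} ≻ {a,b}; ≿_3: {a,c} ≻ d ≻ b; ≿_4: {b,d} ≻ a ≻ c. Then every anonymous, neutral, and efficient SDS f satisfies f(R10)(a) = f(R10)(d) = 1/2 and f(R10)(b) = f(R10)(c) = 0. -/
import Mathlib


open Classical

noncomputable section

variable {A : Type*} [Fintype A]

/-- A (weak) preference relation: complete and transitive. -/
def IsPref (r : A → A → Prop) : Prop :=
  (∀ x y, r x y ∨ r y x) ∧ ∀ x y z, r x y → r y z → r x z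

/-- A lottery over the alternatives. -/
def Lottery (A : Type*) [Fintype A] :=
  {p : A → ℝ // (∀ x, 0 ≤ p x) ∧ ∑ x, p x = 1}

/-- Probability that lottery `p` yields an alternative at least as good as `x` w.r.t. `r`. -/
def upperSum (r : A → A → Prop) (p : Lottery A) (x : A) : ℝ :=
  ∑ y, if r y x then p.1 y else 0

/-- `p` (weakly) stochastically dominates `q` w.r.t. the preference relation `r`. -/
def SDGe (r : A → A → Prop) (p q : Lottery A) : Prop :=
  ∀ x, upperSum r q x ≤ upperSum r p x

/-- Strict stochastic dominance. -/
def SDGt (r : A → A → Prop) (p q : Lottery A) : Prop :=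
  SDGe r p q ∧ ¬ SDGe r q p

/-- A profile assigning a preference relation to each of `n` agents; validity. -/
def ValidProfile {n : ℕ} (R : Fin n → A → A → Prop) : Prop :=
  ∀ i, IsPref (R i)

/-- `p` is SD-efficient at profile `R`. -/
def SDEfficientAt {n : ℕ} (R : Fin n → A → A → Prop) (p : Lottery A) : Prop :=
  ¬ ∃ q : Lottery A, (∀ i, SDGe (R i) q p) ∧ ∃ i, SDGt (R i) q p

def Anonymous {n : ℕ} (f : (Fin n → A → A → Prop) → Lottery A) : Prop :=
  ∀ R : Fin n → A → A → Prop, ValidProfile R →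
    ∀ σ : Equiv.Perm (Fin n), f (R ∘ σ) = f R

/-- Relabel a preference relation by a permutation of the alternatives. -/
def relabel (π : Equiv.Perm A) (r : A → A → Prop) : A → A → Prop :=
  fun x y => r (π.symm x) (π.symm y)

def relabelProfile {n : ℕ} (π : Equiv.Perm A) (R : Fin n → A → A → Prop) :
    Fin n → A → A → Prop :=
  fun i => relabel π (R i)

def Neutral {n : ℕ} (f : (Fin n → A → A → Prop) → Lottery A) : Prop :=
  ∀ R : Fin n → A → A → Prop, ValidProfile R →
    ∀ (π : Equiv.Perm A) (x : A), (f (relabelProfile π R)).1 (π x) = (f R).1 x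

def Efficient {n : ℕ} (f : (Fin n → A → A → Prop) → Lottery A) : Prop :=
  ∀ R : Fin n → A → A → Prop, ValidProfile R → SDEfficientAt R (f R)

def Strategyproof {n : ℕ} (f : (Fin n → A → A → Prop) → Lottery A) : Prop :=
  ¬ ∃ (R : Fin n → A → A → Prop) (i : Fin n) (r : A → A → Prop),
      ValidProfile R ∧ IsPref r ∧ SDGt (R i) (f (Function.update R i r)) (f R)


/-- The preference relation induced by a rank function (lower rank = better). -/
def prefOfRank (ρ : Fin 4 → ℕ) : Fin 4 → Fin 4 → Prop := fun x y => ρ x ≤ ρ y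

/-- Profile `R10`: with `a = 0`, `b = 1`, `c = 2`, `d = 3`;
`≿₁: {a,b},{c,d}`, `≿₂: {c,d},{a,b}`, `≿₃: {a,c},d,b`, `≿₄: {b,d},a,c`. -/
def R10 : Fin 4 → Fin 4 → Fin 4 → Prop :=
  ![prefOfRank ![0, 0, 1, 1], prefOfRank ![1, 1, 0, 0],
    prefOfRank ![0, 2, 0, 1], prefOfRank ![1, 0, 2, 0]]

lemma R10_valid : ValidProfile R10 := by
  intro i
  fin_cases i <;>
    exact ⟨fun x y => le_total _ _, fun x y z hxy hyz => le_trans hxy hyz⟩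

/-- Permutation of alternatives swapping `a ↔ d`, `b ↔ c`. -/
def Pi4 : Equiv.Perm (Fin 4) := (Equiv.swap 0 3).trans (Equiv.swap 1 2)

/-- Permutation of agents swapping `1 ↔ 2`, `3 ↔ 4`. -/
def Sig4 : Equiv.Perm (Fin 4) := (Equiv.swap 0 1).trans (Equiv.swap 2 3)

lemma R10_relabel : relabelProfile Pi4 R10 = R10 ∘ Sig4 := by
  funext i x y
  fin_cases i <;> fin_cases x <;> fin_cases y <;>
    simp [relabelProfile, relabel, R10, prefOfRank, Pi4, Sig4,
      Equiv.swap_apply_def, Function.comp, Matrix.vecHead, Matrix.vecTail]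

/-- Any lottery with equal positive probabilities on `b` and `c` is SD-inefficient at `R10`. -/
lemma R10_not_eff (p : Lottery (Fin 4)) (h21 : p.1 2 = p.1 1) (hpos : 0 < p.1 1) :
    ¬ SDEfficientAt R10 p := by
  have hnn := p.2.1
  have hsum : p.1 0 + p.1 1 + p.1 2 + p.1 3 = 1 := by
    have := p.2.2; rwa [Fin.sum_univ_four] at this
  intro h
  apply h
  refine ⟨⟨![p.1 0 + p.1 1, 0, 0, p.1 3 + p.1 2], ?_, ?_⟩, ?_, 2, ?_, ?_⟩
  · intro x
    fin_cases x <;> simp <;> linarith [hnn 0, hnn 1, hnn 2, hnn 3]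
  · rw [Fin.sum_univ_four]; simp; linarith
  · intro i x
    fin_cases i <;> fin_cases x <;>
      simp [SDGe, upperSum, R10, prefOfRank, Fin.sum_univ_four] <;> linarith
  · intro x
    fin_cases x <;>
      simp [upperSum, R10, prefOfRank, Fin.sum_univ_four] <;> linarith
  · intro hcon
    have := hcon 3
    simp [upperSum, R10, prefOfRank, Fin.sum_univ_four] at this
    linarith

/-- Every anonymous, neutral, and efficient SDS puts probability `1/2` on each of `a` and
`d` and probability `0` on each of `b` and `c` at `R10`. -/
theorem R10_values (f : (Fin 4 → Fin 4 → Fin 4 → Prop) → Lottery (Fin 4))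
    (hAnon : Anonymous f) (hNeut : Neutral f) (hEff : Efficient f) :
    (f R10).1 0 = 1/2 ∧ (f R10).1 3 = 1/2 ∧ (f R10).1 1 = 0 ∧ (f R10).1 2 = 0  := by
  set p := f R10 with hpdef
  have hsym : ∀ x, p.1 (Pi4 x) = p.1 x := by
    intro x
    have h1 := hNeut R10 R10_valid Pi4 x
    rw [R10_relabel, hAnon R10 R10_valid Sig4] at h1
    exact h1
  have h30 : p.1 3 = p.1 0 := by
    have := hsym 0
    simpa [show Pi4 (0 : Fin 4) = 3 from rfl] using this
  have h21 : p.1 2 = p.1 1 := by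
    have := hsym 1
    simpa [show Pi4 (1 : Fin 4) = 2 from rfl] using this
  have hnn := p.2.1
  have hsum : p.1 0 + p.1 1 + p.1 2 + p.1 3 = 1 := by
    have := p.2.2; rwa [Fin.sum_univ_four] at this
  have h1zero : p.1 1 = 0 := by
    by_contra hne
    exact R10_not_eff p h21 (lt_of_le_of_ne (hnn 1) (Ne.symm hne))
      (hEff R10 R10_valid)
  have h2zero : p.1 2 = 0 := by rw [h21, h1zero]
  exact ⟨by linarith, by linarith, h1zero, h2zero⟩

end
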